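/- arXiv:1606.09064 — 5 statements merged into one kernel-verified Lean document; each statement's English description precedes it below -/
import Mathlib

section
/- Suppose (v, w): ℝ² → ℝ² is a C² solution of the system v_t = w_x, w_t = (v² + α(w + v²/2))·v_x, where α ∈ ℝ. Define z = w + (α/2)v². Then z satisfies the conservation law z_t = ((1/3 + α/6)v³ + α v w)_x. -/
private lemma part1 {f : ℝ → ℝ → ℝ} (hf : ContDiff ℝ 2 (Function.uncurry f))
    (x t : ℝ) : DifferentiableAt ℝ (fun x' => f x' t) x := by
  have := (hf.differentiable two_ne_zero).comp
    ((differentiable_id.prodMk (differentiable_const t)))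
  exact this.differentiableAt

private lemma part2 {f : ℝ → ℝ → ℝ} (hf : ContDiff ℝ 2 (Function.uncurry f))
    (x t : ℝ) : DifferentiableAt ℝ (fun t' => f x t') t := by
  have := (hf.differentiable two_ne_zero).comp
    (((differentiable_const x).prodMk differentiable_id))
  exact this.differentiableAt

/-- if (v,w) is a C² solution of v_t = w_x,
    w_t = (v² + α(w + v²/2))·v_x, then z := w + (α/2)v² satisfies
    z_t = ((1/3 + α/6)v³ + α v w)_x.  Here v x t, w x t. -/
theorem stmt_10 (α : ℝ) (v w z : ℝ → ℝ → ℝ)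
    (hv : ContDiff ℝ 2 (Function.uncurry v)) (hw : ContDiff ℝ 2 (Function.uncurry w))
    (heq1 : ∀ x t : ℝ, deriv (fun t' => v x t') t = deriv (fun x' => w x' t) x)
    (heq2 : ∀ x t : ℝ, deriv (fun t' => w x t') t
      = ((v x t) ^ 2 + α * (w x t + (v x t) ^ 2 / 2)) * deriv (fun x' => v x' t) x)
    (hz : ∀ x t : ℝ, z x t = w x t + (α / 2) * (v x t) ^ 2) :
    ∀ x t : ℝ,
      deriv (fun t' => z x t') t
      = deriv (fun x' => (1 / 3 + α / 6) * (v x' t) ^ 3 + α * v x' t * w x' t) x := by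
  intro x t
  have hvx := part1 hv x t
  have hvt := part2 hv x t
  have hwx := part1 hw x t
  have hwt := part2 hw x t
  have hzfun : (fun t' => z x t') = fun t' => w x t' + (α / 2) * (v x t') ^ 2 := by
    funext t'; exact hz x t'
  rw [hzfun]
  have hL : deriv (fun t' => w x t' + (α / 2) * (v x t') ^ 2) t
      = deriv (fun t' => w x t') t + (α / 2) * (2 * v x t * deriv (fun t' => v x t') t) := by
    rw [deriv_fun_add hwt (by fun_prop), deriv_const_mul _ (by fun_prop)]
    congr 1
    rw [show (fun t' => (v x t') ^ 2) = fun t' => (v x t') * (v x t') by funext t'; ring,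
      deriv_fun_mul hvt hvt]
    ring
  have hR : deriv (fun x' => (1 / 3 + α / 6) * (v x' t) ^ 3 + α * v x' t * w x' t) x
      = (1 / 3 + α / 6) * (3 * (v x t) ^ 2 * deriv (fun x' => v x' t) x)
        + α * (deriv (fun x' => v x' t) x * w x t + v x t * deriv (fun x' => w x' t) x) := by
    rw [deriv_fun_add (by fun_prop) (by fun_prop)]
    congr 1
    · rw [deriv_const_mul _ (by fun_prop)]
      congr 1
      rw [show (fun x' => (v x' t) ^ 3) = fun x' => (v x' t) * ((v x' t) * (v x' t)) by
        funext x'; ring, deriv_fun_mul hvx (by fun_prop), deriv_fun_mul hvx hvx]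
      ring
    · rw [show (fun x' => α * v x' t * w x' t) = fun x' => α * (v x' t * w x' t) by
        funext x'; ring, deriv_const_mul _ (by fun_prop), deriv_fun_mul hvx hwx]
  rw [hL, hR, heq2 x t, heq1 x t]
  ring
end

section
/- (Poincaré-type inequality) Let I ⊂ ℝ be an open interval, Φ ∈ C²(I) strictly convex, and Ψ ∈ C¹(I) with Ψ'(s) = √(Φ''(s)). Then for every C¹ function f: 𝕋 → I with a = min f, b = max f and a < b, one has ∫_𝕋 Φ(f(x))dx − Φ(∫_𝕋 f(x)dx) ≤ C_Φ(a,b)·∫_𝕋 Φ''(f(x))·f'(x)² dx, where C_Φ(a,b) = (Φ(a) + Φ(b) − 2Φ((a+b)/2)) / (Ψ(b) − Ψ(a))². -/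
open intervalIntegral

/-- Poincaré-type inequality. The torus 𝕋 is modeled by
    1-periodic functions on ℝ with integrals over [0,1]. -/
theorem stmt_15 (I : Set ℝ) (hIopen : IsOpen I) (hIconv : Convex ℝ I)
    (Φ Ψ : ℝ → ℝ) (hΦreg : ContDiffOn ℝ 2 Φ I) (hΦconv : StrictConvexOn ℝ I Φ)
    (hΨreg : ContDiffOn ℝ 1 Ψ I)
    (hΨ : ∀ s ∈ I, deriv Ψ s = Real.sqrt (deriv (deriv Φ) s))
    (f : ℝ → ℝ) (hf : ContDiff ℝ 1 f) (hfper : Function.Periodic f 1)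
    (hfI : ∀ x, f x ∈ I)
    (a b : ℝ) (hab : a < b)
    (ha : IsLeast (f '' Set.Icc 0 1) a) (hb : IsGreatest (f '' Set.Icc 0 1) b) :
    (∫ x in (0:ℝ)..1, Φ (f x)) - Φ (∫ x in (0:ℝ)..1, f x)
      ≤ ((Φ a + Φ b - 2 * Φ ((a + b) / 2)) / (Ψ b - Ψ a) ^ 2)
        * ∫ x in (0:ℝ)..1, deriv (deriv Φ) (f x) * (deriv f x) ^ 2 := by
  obtain ⟨x₁, hx₁, hfx₁⟩ := ha.1
  obtain ⟨x₂, hx₂, hfx₂⟩ := hb.1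
  have haI : a ∈ I := hfx₁ ▸ hfI x₁
  have hbI : b ∈ I := hfx₂ ▸ hfI x₂
  have hIcc : Set.Icc a b ⊆ I := hIconv.ordConnected.out haI hbI
  have hba : (0:ℝ) < b - a := sub_pos.2 hab
  -- regularity facts
  have hΦd : DifferentiableOn ℝ Φ I := hΦreg.differentiableOn two_ne_zero
  have hΦ'cd : ContDiffOn ℝ 1 (deriv Φ) I := hΦreg.deriv_of_isOpen hIopen (by norm_num)
  have hΦ'd : DifferentiableOn ℝ (deriv Φ) I := hΦ'cd.differentiableOn one_ne_zero
  have hΦ'c : ContinuousOn (deriv Φ) I := hΦ'cd.continuousOn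
  have hΨd : DifferentiableOn ℝ Ψ I := hΨreg.differentiableOn one_ne_zero
  have hΨ'c : ContinuousOn (deriv Ψ) I := hΨreg.continuousOn_deriv_of_isOpen hIopen le_rfl
  have hΦ''c : ContinuousOn (deriv (deriv Φ)) I :=
    hΦ'cd.continuousOn_deriv_of_isOpen hIopen le_rfl
  have hfc : Continuous f := hf.continuous
  have hf'c : Continuous (deriv f) := hf.continuous_deriv le_rfl
  have hfd : Differentiable ℝ f := hf.differentiable one_ne_zero
  -- the derivative of Φ is strictly monotone on I
  have hmono : StrictMonoOn (deriv Φ) I :=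
    hΦconv.strictMonoOn_deriv fun s hs => (hΦd s hs).differentiableAt (hIopen.mem_nhds hs)
  -- second derivative is nonnegative on I
  have hΦ''nonneg : ∀ s ∈ I, 0 ≤ deriv (deriv Φ) s := by
    intro s hs
    have hd : HasDerivAt (deriv Φ) (deriv (deriv Φ) s) s :=
      ((hΦ'd s hs).differentiableAt (hIopen.mem_nhds hs)).hasDerivAt
    have ht : Filter.Tendsto (slope (deriv Φ) s) (nhdsWithin s (Set.Ioi s))
        (nhds (deriv (deriv Φ) s)) := by
      refine (hasDerivAt_iff_tendsto_slope.1 hd).mono_left (nhdsWithin_mono _ ?_)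
      intro t htv
      simp only [Set.mem_compl_iff, Set.mem_singleton_iff]
      exact ne_of_gt htv
    refine ge_of_tendsto ht ?_
    filter_upwards [nhdsWithin_le_nhds (hIopen.mem_nhds hs), self_mem_nhdsWithin] with t htI hts
    have h1 : deriv Φ s < deriv Φ t := hmono hs htI hts
    have h2 : (0:ℝ) < t - s := sub_pos.2 hts
    rw [slope_def_field]
    apply div_nonneg (by linarith) (by linarith)
  have hΨ'sq : ∀ s ∈ I, (deriv Ψ s) ^ 2 = deriv (deriv Φ) s := fun s hs => by
    rw [hΨ s hs, Real.sq_sqrt (hΦ''nonneg s hs)]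
  -- the function g = Ψ ∘ f and its derivative G
  set G : ℝ → ℝ := fun x => deriv Ψ (f x) * deriv f x with hGdef
  have hg' : ∀ x, HasDerivAt (fun y => Ψ (f y)) (G x) x := by
    intro x
    have h1 : HasDerivAt Ψ (deriv Ψ (f x)) (f x) :=
      ((hΨd (f x) (hfI x)).differentiableAt (hIopen.mem_nhds (hfI x))).hasDerivAt
    exact h1.comp x (hfd x).hasDerivAt
  have hGc : Continuous G := (hΨ'c.comp_continuous hfc hfI).mul hf'c
  have hHeq : ∀ x, (G x) ^ 2 = deriv (deriv Φ) (f x) * (deriv f x) ^ 2 := by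
    intro x
    calc (G x) ^ 2 = (deriv Ψ (f x)) ^ 2 * (deriv f x) ^ 2 := by rw [hGdef]; ring
    _ = deriv (deriv Φ) (f x) * (deriv f x) ^ 2 := by rw [hΨ'sq (f x) (hfI x)]
  have hHc : Continuous (fun x => deriv (deriv Φ) (f x) * (deriv f x) ^ 2) :=
    (hΦ''c.comp_continuous hfc hfI).mul (hf'c.pow 2)
  have hHnonneg : ∀ x, 0 ≤ deriv (deriv Φ) (f x) * (deriv f x) ^ 2 := fun x =>
    (hHeq x) ▸ sq_nonneg (G x)
  -- key lower bound on the energy integral over a subinterval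
  have key : ∀ p q : ℝ, p ∈ Set.Icc (0:ℝ) 1 → q ∈ Set.Icc (0:ℝ) 1 → p ≤ q →
      (Ψ (f q) - Ψ (f p)) ^ 2 ≤ ∫ x in (0:ℝ)..1, deriv (deriv Φ) (f x) * (deriv f x) ^ 2 := by
    intro p q hp hq hpq
    set k := Ψ (f q) - Ψ (f p) with hk
    have hHint : ∀ u v : ℝ, IntervalIntegrable
        (fun x => deriv (deriv Φ) (f x) * (deriv f x) ^ 2) MeasureTheory.volume u v :=
      fun u v => hHc.intervalIntegrable u v
    have hsplit : (∫ x in (0:ℝ)..1, deriv (deriv Φ) (f x) * (deriv f x) ^ 2)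
        = (∫ x in (0:ℝ)..p, deriv (deriv Φ) (f x) * (deriv f x) ^ 2)
          + (∫ x in p..q, deriv (deriv Φ) (f x) * (deriv f x) ^ 2)
          + (∫ x in q..(1:ℝ), deriv (deriv Φ) (f x) * (deriv f x) ^ 2) := by
      rw [integral_add_adjacent_intervals (hHint 0 p) (hHint p q),
        integral_add_adjacent_intervals (hHint 0 q) (hHint q 1)]
    have h0p : 0 ≤ ∫ x in (0:ℝ)..p, deriv (deriv Φ) (f x) * (deriv f x) ^ 2 :=
      integral_nonneg hp.1 fun u _ => hHnonneg u
    have hq1 : 0 ≤ ∫ x in q..(1:ℝ), deriv (deriv Φ) (f x) * (deriv f x) ^ 2 :=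
      integral_nonneg hq.2 fun u _ => hHnonneg u
    have hFTC : (∫ x in p..q, G x) = Ψ (f q) - Ψ (f p) :=
      integral_eq_sub_of_hasDerivAt (fun x _ => hg' x) (hGc.intervalIntegrable p q)
    have hlin : (∫ x in p..q, (2 * k * G x - k ^ 2))
        = 2 * k * (Ψ (f q) - Ψ (f p)) - k ^ 2 * (q - p) := by
      rw [intervalIntegral.integral_sub ((hGc.intervalIntegrable p q).const_mul _)
        (intervalIntegrable_const), intervalIntegral.integral_const_mul, hFTC,
        intervalIntegral.integral_const]
      simp [mul_comm]
    have hptwise : ∀ x ∈ Set.Icc p q, 2 * k * G x - k ^ 2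
        ≤ deriv (deriv Φ) (f x) * (deriv f x) ^ 2 := by
      intro x _
      rw [← hHeq x]
      nlinarith [sq_nonneg (G x - k)]
    have hmid : 2 * k * (Ψ (f q) - Ψ (f p)) - k ^ 2 * (q - p)
        ≤ ∫ x in p..q, deriv (deriv Φ) (f x) * (deriv f x) ^ 2 := by
      rw [← hlin]
      exact integral_mono_on hpq
        (((hGc.intervalIntegrable p q).const_mul _).sub intervalIntegrable_const)
        (hHint p q) hptwise
    have hqp1 : q - p ≤ 1 := by
      have := hp.1; have := hq.2; linarith
    have : k ^ 2 ≤ 2 * k * (Ψ (f q) - Ψ (f p)) - k ^ 2 * (q - p) := by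
      rw [← hk]
      nlinarith [sq_nonneg k]
    linarith
  -- energy integral ≥ (Ψ b - Ψ a)^2
  have hR : (Ψ b - Ψ a) ^ 2 ≤ ∫ x in (0:ℝ)..1, deriv (deriv Φ) (f x) * (deriv f x) ^ 2 := by
    rcases le_total x₁ x₂ with h | h
    · have := key x₁ x₂ hx₁ hx₂ h
      rwa [hfx₁, hfx₂] at this
    · have := key x₂ x₁ hx₂ hx₁ h
      rw [hfx₁, hfx₂] at this
      have heq : (Ψ a - Ψ b) ^ 2 = (Ψ b - Ψ a) ^ 2 := by ring
      linarith [heq ▸ this]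
  -- Ψ b - Ψ a > 0
  have hΨmono : MonotoneOn Ψ (Set.Icc a b) := by
    apply monotoneOn_of_deriv_nonneg (convex_Icc a b) (hΨreg.continuousOn.mono hIcc)
    · intro s hs
      rw [interior_Icc] at hs
      exact ((hΨd s (hIcc (Set.Ioo_subset_Icc_self hs))).differentiableAt
        (hIopen.mem_nhds (hIcc (Set.Ioo_subset_Icc_self hs)))).differentiableWithinAt
    · intro s hs
      rw [interior_Icc] at hs
      rw [hΨ s (hIcc (Set.Ioo_subset_Icc_self hs))]
      exact Real.sqrt_nonneg _
  have hc_pos : 0 < Ψ b - Ψ a := by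
    rcases lt_or_ge (Ψ a) (Ψ b) with h | h
    · linarith
    · exfalso
      have hΨab : Ψ a = Ψ b := le_antisymm
        (hΨmono (Set.left_mem_Icc.2 hab.le) (Set.right_mem_Icc.2 hab.le) hab.le) h
      -- Ψ is constant on [a,b], hence Φ'' = 0 on (a,b)
      have hconst : ∀ s ∈ Set.Icc a b, Ψ s = Ψ a := by
        intro s hs
        refine le_antisymm ?_ (hΨmono (Set.left_mem_Icc.2 hab.le) hs hs.1)
        calc Ψ s ≤ Ψ b := hΨmono hs (Set.right_mem_Icc.2 hab.le) hs.2
        _ = Ψ a := hΨab.symm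
      have hΦ''zero : ∀ s ∈ Set.Ioo a b, deriv (deriv Φ) s = 0 := by
        intro s hs
        have hev : Ψ =ᶠ[nhds s] fun _ => Ψ a := by
          filter_upwards [isOpen_Ioo.mem_nhds hs] with t htm
          exact hconst t (Set.Ioo_subset_Icc_self htm)
        have hder : deriv Ψ s = 0 := by
          rw [Filter.EventuallyEq.deriv_eq hev, deriv_const]
        have hIs : s ∈ I := hIcc (Set.Ioo_subset_Icc_self hs)
        have := hΨ s hIs
        rw [hder] at this
        have h0 := hΦ''nonneg s hIs
        have := Real.sqrt_eq_zero h0 |>.1 this.symm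
        exact this
      -- MVT contradiction with strict monotonicity of deriv Φ
      set p := a + (b - a) / 4 with hpdef
      set q := b - (b - a) / 4 with hqdef
      have hpq : p < q := by rw [hpdef, hqdef]; linarith
      have hpqIoo : Set.Icc p q ⊆ Set.Ioo a b := by
        intro t htm
        constructor
        · have := htm.1; rw [hpdef] at this; linarith
        · have := htm.2; rw [hqdef] at this; linarith
      obtain ⟨ξ, hξ, hξeq⟩ := exists_deriv_eq_slope (deriv Φ) hpq
        (hΦ'c.mono (fun t htm => hIcc (Set.Ioo_subset_Icc_self (hpqIoo htm))))
        (hΦ'd.mono (fun t htm => hIcc (Set.Ioo_subset_Icc_self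
          (hpqIoo (Set.Ioo_subset_Icc_self htm)))))
      have hξab : ξ ∈ Set.Ioo a b := hpqIoo (Set.Ioo_subset_Icc_self hξ)
      have hzero : deriv (deriv Φ) ξ = 0 := hΦ''zero ξ hξab
      have hlt : deriv Φ p < deriv Φ q :=
        hmono (hIcc (Set.Ioo_subset_Icc_self (hpqIoo ⟨le_refl p, hpq.le⟩)))
          (hIcc (Set.Ioo_subset_Icc_self (hpqIoo ⟨hpq.le, le_refl q⟩))) hpq
      rw [hzero] at hξeq
      have : deriv Φ q - deriv Φ p > 0 := by linarith
      have hqp : q - p > 0 := by linarith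
      have := div_pos this hqp
      rw [← hξeq] at this
      exact lt_irrefl 0 this
  -- chord inequality
  have hchord : ∀ t ∈ Set.Icc a b, (b - a) * Φ t ≤ (b - t) * Φ a + (t - a) * Φ b := by
    intro t htm
    have hwa : (0:ℝ) ≤ (b - t) / (b - a) := div_nonneg (by linarith [htm.2]) hba.le
    have hwb : (0:ℝ) ≤ (t - a) / (b - a) := div_nonneg (by linarith [htm.1]) hba.le
    have hsum : (b - t) / (b - a) + (t - a) / (b - a) = 1 := by
      field_simp
      ring
    have h := hΦconv.convexOn.2 haI hbI hwa hwb hsum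
    have hpt : ((b - t) / (b - a)) • a + ((t - a) / (b - a)) • b = t := by
      rw [smul_eq_mul, smul_eq_mul]
      field_simp
      ring
    rw [hpt, smul_eq_mul, smul_eq_mul] at h
    have h2 := mul_le_mul_of_nonneg_left h hba.le
    calc (b - a) * Φ t ≤ (b - a) * ((b - t) / (b - a) * Φ a + (t - a) / (b - a) * Φ b) := h2
    _ = (b - t) * Φ a + (t - a) * Φ b := by field_simp
  -- midpoint convexity
  have hmidpt : ∀ s t : ℝ, s ∈ I → t ∈ I → 2 * Φ ((s + t) / 2) ≤ Φ s + Φ t := by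
    intro s t hs ht
    have h := hΦconv.convexOn.2 hs ht (by norm_num : (0:ℝ) ≤ 1/2)
      (by norm_num : (0:ℝ) ≤ 1/2) (by norm_num)
    rw [smul_eq_mul, smul_eq_mul, smul_eq_mul, smul_eq_mul] at h
    have : (1:ℝ)/2 * s + 1/2 * t = (s + t) / 2 := by ring
    rw [this] at h
    linarith
  -- bounds on the mean m
  set m := ∫ x in (0:ℝ)..1, f x with hmdef
  have hfint : IntervalIntegrable f MeasureTheory.volume 0 1 := hfc.intervalIntegrable 0 1
  have hfmem : ∀ x ∈ Set.Icc (0:ℝ) 1, f x ∈ Set.Icc a b := fun x hx =>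
    ⟨ha.2 ⟨x, hx, rfl⟩, hb.2 ⟨x, hx, rfl⟩⟩
  have hma : a ≤ m := by
    have h := integral_mono_on (μ := MeasureTheory.volume) (a := (0:ℝ)) (b := 1)
      zero_le_one (_root_.intervalIntegrable_const (c := a)) hfint
      (fun x hx => (hfmem x hx).1)
    simpa using h
  have hmb : m ≤ b := by
    have h := integral_mono_on (μ := MeasureTheory.volume) (a := (0:ℝ)) (b := 1)
      zero_le_one hfint (_root_.intervalIntegrable_const (c := b))
      (fun x hx => (hfmem x hx).2)
    simpa using h
  have hmI : m ∈ I := hIcc ⟨hma, hmb⟩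
  have hm'I : a + b - m ∈ I := hIcc ⟨by linarith, by linarith⟩
  -- integral of the chord
  have hΦfc : Continuous fun x => Φ (f x) := hΦreg.continuousOn.comp_continuous hfc hfI
  have hint1 : (b - a) * ∫ x in (0:ℝ)..1, Φ (f x) ≤ (b - m) * Φ a + (m - a) * Φ b := by
    have hlin : (∫ x in (0:ℝ)..1, ((Φ b - Φ a) * f x + (b * Φ a - a * Φ b)))
        = (Φ b - Φ a) * m + (b * Φ a - a * Φ b) := by
      rw [intervalIntegral.integral_add (hfint.const_mul _) intervalIntegrable_const,
        intervalIntegral.integral_const_mul, intervalIntegral.integral_const]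
      simp
      exact Or.inl rfl
    calc (b - a) * ∫ x in (0:ℝ)..1, Φ (f x)
        = ∫ x in (0:ℝ)..1, (b - a) * Φ (f x) := (intervalIntegral.integral_const_mul _ _).symm
    _ ≤ ∫ x in (0:ℝ)..1, ((Φ b - Φ a) * f x + (b * Φ a - a * Φ b)) := by
        apply integral_mono_on zero_le_one ((hΦfc.intervalIntegrable 0 1).const_mul _)
          ((hfint.const_mul _).add intervalIntegrable_const)
        intro x hx
        calc (b - a) * Φ (f x) ≤ (b - f x) * Φ a + (f x - a) * Φ b :=
              hchord (f x) (hfmem x hx)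
        _ = (Φ b - Φ a) * f x + (b * Φ a - a * Φ b) := by ring
    _ = (Φ b - Φ a) * m + (b * Φ a - a * Φ b) := hlin
    _ = (b - m) * Φ a + (m - a) * Φ b := by ring
  -- Jensen gap bound
  have hgap : (∫ x in (0:ℝ)..1, Φ (f x)) - Φ m
      ≤ Φ a + Φ b - 2 * Φ ((a + b) / 2) := by
    have hch' : (b - a) * Φ (a + b - m) ≤ (m - a) * Φ a + (b - m) * Φ b := by
      have := hchord (a + b - m) ⟨by linarith, by linarith⟩
      calc (b - a) * Φ (a + b - m)
          ≤ (b - (a + b - m)) * Φ a + ((a + b - m) - a) * Φ b := this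
      _ = (m - a) * Φ a + (b - m) * Φ b := by ring
    have hmid' : 2 * Φ ((a + b) / 2) ≤ Φ m + Φ (a + b - m) := by
      have := hmidpt m (a + b - m) hmI hm'I
      have harg : (m + (a + b - m)) / 2 = (a + b) / 2 := by ring
      rwa [harg] at this
    have hmul : (b - a) * ((∫ x in (0:ℝ)..1, Φ (f x)) - Φ m)
        ≤ (b - a) * (Φ a + Φ b - 2 * Φ ((a + b) / 2)) := by nlinarith [hint1, hch', hmid']
    exact le_of_mul_le_mul_left hmul hba
  have hD0 : 0 ≤ Φ a + Φ b - 2 * Φ ((a + b) / 2) := by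
    have harg : (a + b) / 2 = (a + b) / 2 := rfl
    have := hmidpt a b haI hbI
    linarith
  have hc2 : (0:ℝ) < (Ψ b - Ψ a) ^ 2 := by positivity
  calc (∫ x in (0:ℝ)..1, Φ (f x)) - Φ m ≤ Φ a + Φ b - 2 * Φ ((a + b) / 2) := hgap
  _ = ((Φ a + Φ b - 2 * Φ ((a + b) / 2)) / (Ψ b - Ψ a) ^ 2) * (Ψ b - Ψ a) ^ 2 := by
      field_simp
  _ ≤ ((Φ a + Φ b - 2 * Φ ((a + b) / 2)) / (Ψ b - Ψ a) ^ 2)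
        * ∫ x in (0:ℝ)..1, deriv (deriv Φ) (f x) * (deriv f x) ^ 2 :=
      mul_le_mul_of_nonneg_left hR (div_nonneg hD0 hc2.le)
end

section
/- (Reverse Jensen bound) Let I ⊂ ℝ be an interval, Φ: I → ℝ convex and continuous, and f: 𝕋 → I continuous with a = min f, b = max f. Then ∫_𝕋 Φ(f(x))dx − Φ(∫_𝕋 f(x)dx) ≤ Φ(a) + Φ(b) − 2Φ((a+b)/2). -/
/-- reverse Jensen bound. The torus 𝕋 is modeled by 1-periodic
    functions on ℝ with integrals over [0,1]. -/
theorem stmt_16 (I : Set ℝ) (hIconv : Convex ℝ I)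
    (Φ : ℝ → ℝ) (hΦconv : ConvexOn ℝ I Φ) (hΦcont : ContinuousOn Φ I)
    (f : ℝ → ℝ) (hf : Continuous f) (hfper : Function.Periodic f 1)
    (hfI : ∀ x, f x ∈ I)
    (a b : ℝ)
    (ha : IsLeast (f '' Set.Icc 0 1) a) (hb : IsGreatest (f '' Set.Icc 0 1) b) :
    (∫ x in (0:ℝ)..1, Φ (f x)) - Φ (∫ x in (0:ℝ)..1, f x)
      ≤ Φ a + Φ b - 2 * Φ ((a + b) / 2) := by
  obtain ⟨⟨x₀, hx₀, hax⟩, hlb⟩ := ha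
  obtain ⟨⟨x₁, hx₁, hbx⟩, hub⟩ := hb
  have haI : I a := hax ▸ hfI x₀
  have hbI : I b := hbx ▸ hfI x₁
  have hab : a ≤ b := hlb ⟨x₁, hx₁, hbx⟩
  have hfab : ∀ x ∈ Set.Icc (0:ℝ) 1, a ≤ f x ∧ f x ≤ b :=
    fun x hx => ⟨hlb ⟨x, hx, rfl⟩, hub ⟨x, hx, rfl⟩⟩
  have hIcc : Set.Icc a b ⊆ I := hIconv.ordConnected.out haI hbI
  have hcont : Continuous (fun x => Φ (f x)) := by
    rw [← continuousOn_univ]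
    exact hΦcont.comp hf.continuousOn (fun x _ => hfI x)
  have hfint : IntervalIntegrable f MeasureTheory.volume 0 1 := hf.intervalIntegrable 0 1
  set m : ℝ := ∫ x in (0:ℝ)..1, f x with hm
  have ham : a ≤ m := by
    have : (∫ x in (0:ℝ)..1, a) ≤ m :=
      intervalIntegral.integral_mono_on (by norm_num) intervalIntegrable_const hfint
        (fun x hx => (hfab x hx).1)
    simpa using this
  have hmb : m ≤ b := by
    have : m ≤ ∫ x in (0:ℝ)..1, b :=
      intervalIntegral.integral_mono_on (by norm_num) hfint intervalIntegrable_const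
        (fun x hx => (hfab x hx).2)
    simpa using this
  rcases eq_or_lt_of_le hab with heq | hlt
  · -- a = b : f is constant a on [0,1]
    subst heq
    have hma : m = a := le_antisymm hmb ham
    have h1 : (∫ x in (0:ℝ)..1, Φ (f x)) = Φ a := by
      rw [intervalIntegral.integral_congr (g := fun _ => Φ a)]
      · simp
      · intro x hx
        rw [Set.uIcc_of_le (by norm_num : (0:ℝ) ≤ 1)] at hx
        have := hfab x hx
        have : f x = a := le_antisymm this.2 this.1
        simp [this]
    rw [h1, hma]
    have : (a + a) / 2 = a := by ring
    rw [this]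
    linarith
  · set s : ℝ := (Φ b - Φ a) / (b - a) with hs
    have hba : b - a ≠ 0 := by linarith
    -- secant bound
    have hsec : ∀ y, a ≤ y → y ≤ b → Φ y ≤ Φ a + (y - a) * s := by
      intro y hay hyb
      set t : ℝ := (b - y) / (b - a) with ht
      have ht0 : 0 ≤ t := div_nonneg (by linarith) (by linarith)
      have ht1 : 0 ≤ 1 - t := by
        have : t ≤ 1 := by
          rw [div_le_one (by linarith)]; linarith
        linarith
      have e : 1 - t = (y - a) / (b - a) := by
        rw [ht, one_sub_div hba]; ring
      have e2 : (1 - t) * (b - a) = y - a := by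
        rw [ht, one_sub_div hba, div_mul_cancel₀ _ hba]; ring
      have hy : t * a + (1 - t) * b = y := by
        linear_combination e2
      have := hΦconv.2 haI hbI ht0 ht1 (by ring)
      simp only [smul_eq_mul] at this
      rw [hy] at this
      calc Φ y ≤ t * Φ a + (1 - t) * Φ b := this
        _ = Φ a + (y - a) * s := by
            linear_combination (Φ b - Φ a) * e - (y - a) * hs
    -- integrate the secant bound
    have h1 : (∫ x in (0:ℝ)..1, Φ (f x)) ≤ ∫ x in (0:ℝ)..1, (Φ a + (f x - a) * s) := by
      refine intervalIntegral.integral_mono_on (by norm_num)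
        (hcont.intervalIntegrable 0 1)
        ((continuous_const.add ((hf.sub continuous_const).mul continuous_const)).intervalIntegrable 0 1) ?_
      intro x hx
      exact hsec (f x) (hfab x hx).1 (hfab x hx).2
    have h2 : (∫ x in (0:ℝ)..1, (Φ a + (f x - a) * s)) = Φ a + (m - a) * s := by
      rw [intervalIntegral.integral_add (f := fun _ => Φ a) (g := fun x => (f x - a) * s)
          intervalIntegrable_const
          (((hf.sub continuous_const).mul continuous_const).intervalIntegrable 0 1),
        intervalIntegral.integral_mul_const,
        intervalIntegral.integral_sub hfint intervalIntegrable_const]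
      simp [hm]
    -- midpoint estimate
    have hmI : I m := hIcc ⟨ham, hmb⟩
    have hs'I : I (a + b - m) := hIcc ⟨by linarith, by linarith⟩
    have hmid := hΦconv.2 hmI hs'I (by norm_num : (0:ℝ) ≤ 1/2) (by norm_num : (0:ℝ) ≤ 1/2)
      (by norm_num)
    simp only [smul_eq_mul] at hmid
    have hc : (1/2 : ℝ) * m + (1/2) * (a + b - m) = (a + b) / 2 := by ring
    rw [hc] at hmid
    have hsec2 : Φ (a + b - m) ≤ Φ a + (b - m) * s := by
      have := hsec (a + b - m) (by linarith) (by linarith)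
      calc Φ (a + b - m) ≤ Φ a + (a + b - m - a) * s := this
        _ = Φ a + (b - m) * s := by ring
    have hsum : (b - m) * s + (m - a) * s = Φ b - Φ a := by
      have : (b - m) * s + (m - a) * s = (b - a) * s := by ring
      rw [this, hs, mul_div_cancel₀ _ hba]
    linarith
end

section
/- (Refined Jensen inequality) Let I ⊂ ℝ be an interval, Φ ∈ C(I) convex, and f: 𝕋 → I continuous. Set A = ∫_𝕋 f, p = |{f < A}|, q = |{f ≥ A}|, A₁ = (1/p)∫_{f<A} f, A₂ = (1/q)∫_{f≥A} f (when p, q > 0). Then ∫_𝕋 Φ(f(x))dx − Φ(A) ≥ p·Φ(A₁) + q·Φ(A₂) − (p+q)·Φ(A) ≥ 0. -/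
open MeasureTheory

/-- refined Jensen inequality. The torus 𝕋 is modeled by 1-periodic
    functions on ℝ; integrals and measures are taken over [0,1]. -/
theorem stmt_18 (I : Set ℝ) (hIconv : Convex ℝ I)
    (Φ : ℝ → ℝ) (hΦconv : ConvexOn ℝ I Φ) (hΦcont : ContinuousOn Φ I)
    (f : ℝ → ℝ) (hf : Continuous f) (hfper : Function.Periodic f 1)
    (hfI : ∀ x, f x ∈ I)
    (A p q A₁ A₂ : ℝ)
    (hA : A = ∫ x in (0:ℝ)..1, f x)
    (hp : p = (volume {x ∈ Set.Icc (0:ℝ) 1 | f x < A}).toReal)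
    (hq : q = (volume {x ∈ Set.Icc (0:ℝ) 1 | A ≤ f x}).toReal)
    (hppos : 0 < p) (hqpos : 0 < q)
    (hA₁ : A₁ = (1 / p) * ∫ x in {x ∈ Set.Icc (0:ℝ) 1 | f x < A}, f x)
    (hA₂ : A₂ = (1 / q) * ∫ x in {x ∈ Set.Icc (0:ℝ) 1 | A ≤ f x}, f x) :
    (∫ x in (0:ℝ)..1, Φ (f x)) - Φ A ≥ p * Φ A₁ + q * Φ A₂ - (p + q) * Φ A ∧
    p * Φ A₁ + q * Φ A₂ - (p + q) * Φ A ≥ 0 := by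
  set S₁ : Set ℝ := {x ∈ Set.Icc (0:ℝ) 1 | f x < A} with hS₁def
  set S₂ : Set ℝ := {x ∈ Set.Icc (0:ℝ) 1 | A ≤ f x} with hS₂def
  have hS₁m : MeasurableSet S₁ :=
    measurableSet_Icc.inter (measurableSet_lt hf.measurable measurable_const)
  have hS₂m : MeasurableSet S₂ :=
    measurableSet_Icc.inter (measurableSet_le measurable_const hf.measurable)
  have hS₁sub : S₁ ⊆ Set.Icc (0:ℝ) 1 := fun x hx => hx.1
  have hS₂sub : S₂ ⊆ Set.Icc (0:ℝ) 1 := fun x hx => hx.1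
  have hdisj : Disjoint S₁ S₂ := by
    rw [Set.disjoint_left]
    rintro x ⟨-, hx1⟩ ⟨-, hx2⟩
    exact absurd hx2 (not_le.2 hx1)
  have hunion : S₁ ∪ S₂ = Set.Icc (0:ℝ) 1 := by
    ext x
    simp only [hS₁def, hS₂def, Set.mem_union, Set.mem_setOf_eq, Set.mem_sep_iff]
    constructor
    · rintro (h | h) <;> exact h.1
    · intro h
      rcases lt_or_ge (f x) A with h' | h'
      · exact Or.inl ⟨h, h'⟩
      · exact Or.inr ⟨h, h'⟩
  have hS₁fin : volume S₁ ≠ ⊤ :=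
    ((measure_mono hS₁sub).trans_lt (by simp)).ne
  have hS₂fin : volume S₂ ≠ ⊤ :=
    ((measure_mono hS₂sub).trans_lt (by simp)).ne
  have hS₁ne : volume S₁ ≠ 0 := by
    intro h
    rw [hp, h] at hppos
    simp at hppos
  have hS₂ne : volume S₂ ≠ 0 := by
    intro h
    rw [hq, h] at hqpos
    simp at hqpos
  -- p + q = 1
  have hpq : p + q = 1 := by
    have : volume S₁ + volume S₂ = 1 := by
      rw [← measure_union hdisj hS₂m, hunion]
      simp
    rw [hp, hq, ← ENNReal.toReal_add hS₁fin hS₂fin, this, ENNReal.toReal_one]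
  -- min and max of f on [0,1], defining a closed convex subset of I
  obtain ⟨a, ha, hmin⟩ :=
    isCompact_Icc.exists_isMinOn (Set.nonempty_Icc.2 zero_le_one) hf.continuousOn
  obtain ⟨b, hb, hmax⟩ :=
    isCompact_Icc.exists_isMaxOn (Set.nonempty_Icc.2 zero_le_one) hf.continuousOn
  set T : Set ℝ := Set.Icc (f a) (f b) with hTdef
  have hTsub : T ⊆ I := fun t ht => hIconv.ordConnected.out (hfI a) (hfI b) ht
  have hTconv : ConvexOn ℝ T Φ := hΦconv.subset hTsub (convex_Icc _ _)
  have hTcont : ContinuousOn Φ T := hΦcont.mono hTsub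
  have hfT : ∀ x ∈ Set.Icc (0:ℝ) 1, f x ∈ T := fun x hx => ⟨hmin hx, hmax hx⟩
  -- integrability
  have hΦf : Continuous (Φ ∘ f) := hΦcont.comp_continuous hf hfI
  have hfi : IntegrableOn f (Set.Icc (0:ℝ) 1) := hf.integrableOn_Icc
  have hΦfi : IntegrableOn (Φ ∘ f) (Set.Icc (0:ℝ) 1) := hΦf.integrableOn_Icc
  have hfi₁ : IntegrableOn f S₁ := hfi.mono_set hS₁sub
  have hfi₂ : IntegrableOn f S₂ := hfi.mono_set hS₂sub
  have hΦfi₁ : IntegrableOn (Φ ∘ f) S₁ := hΦfi.mono_set hS₁sub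
  have hΦfi₂ : IntegrableOn (Φ ∘ f) S₂ := hΦfi.mono_set hS₂sub
  have hae₁ : ∀ᵐ x ∂volume.restrict S₁, f x ∈ T :=
    (ae_restrict_iff' hS₁m).2 (Filter.Eventually.of_forall fun x hx => hfT x (hS₁sub hx))
  have hae₂ : ∀ᵐ x ∂volume.restrict S₂, f x ∈ T :=
    (ae_restrict_iff' hS₂m).2 (Filter.Eventually.of_forall fun x hx => hfT x (hS₂sub hx))
  -- averages
  have havg₁ : (⨍ x in S₁, f x) = A₁ := by
    rw [setAverage_eq, hA₁, measureReal_def, ← hp, smul_eq_mul, one_div, inv_mul_eq_div, div_eq_inv_mul]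
  have havg₂ : (⨍ x in S₂, f x) = A₂ := by
    rw [setAverage_eq, hA₂, measureReal_def, ← hq, smul_eq_mul, one_div, inv_mul_eq_div, div_eq_inv_mul]
  -- A₁, A₂ ∈ I
  have hA₁I : A₁ ∈ I := by
    rw [← havg₁]
    exact hTsub ((convex_Icc _ _).set_average_mem isClosed_Icc hS₁ne hS₁fin hae₁ hfi₁)
  have hA₂I : A₂ ∈ I := by
    rw [← havg₂]
    exact hTsub ((convex_Icc _ _).set_average_mem isClosed_Icc hS₂ne hS₂fin hae₂ hfi₂)
  -- Jensen on each set
  have hJ₁ : p * Φ A₁ ≤ ∫ x in S₁, Φ (f x) := by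
    have := hTconv.map_set_average_le hTcont isClosed_Icc hS₁ne hS₁fin hae₁ hfi₁ hΦfi₁
    rw [havg₁, setAverage_eq, smul_eq_mul, measureReal_def, ← hp] at this
    have hp' : p ≠ 0 := hppos.ne'
    calc p * Φ A₁ ≤ p * (p⁻¹ * ∫ x in S₁, Φ (f x)) :=
          mul_le_mul_of_nonneg_left this hppos.le
      _ = ∫ x in S₁, Φ (f x) := by field_simp
  have hJ₂ : q * Φ A₂ ≤ ∫ x in S₂, Φ (f x) := by
    have := hTconv.map_set_average_le hTcont isClosed_Icc hS₂ne hS₂fin hae₂ hfi₂ hΦfi₂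
    rw [havg₂, setAverage_eq, smul_eq_mul, measureReal_def, ← hq] at this
    have hq' : q ≠ 0 := hqpos.ne'
    calc q * Φ A₂ ≤ q * (q⁻¹ * ∫ x in S₂, Φ (f x)) :=
          mul_le_mul_of_nonneg_left this hqpos.le
      _ = ∫ x in S₂, Φ (f x) := by field_simp
  -- splitting integrals
  have hsplit : ∀ g : ℝ → ℝ, IntegrableOn g (Set.Icc (0:ℝ) 1) →
      (∫ x in (0:ℝ)..1, g x) = (∫ x in S₁, g x) + ∫ x in S₂, g x := by
    intro g hg
    rw [intervalIntegral.integral_of_le zero_le_one, ← integral_Icc_eq_integral_Ioc,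
      ← hunion, setIntegral_union hdisj hS₂m (hg.mono_set hS₁sub) (hg.mono_set hS₂sub)]
  -- A = p A₁ + q A₂
  have hAsplit : A = p * A₁ + q * A₂ := by
    rw [hA, hsplit f hfi, hA₁, hA₂]
    field_simp
  have hΦsplit : (∫ x in (0:ℝ)..1, Φ (f x)) = (∫ x in S₁, Φ (f x)) + ∫ x in S₂, Φ (f x) :=
    hsplit (Φ ∘ f) hΦfi
  -- second inequality from convexity
  have hconv2 : Φ A ≤ p * Φ A₁ + q * Φ A₂ := by
    have := hΦconv.2 hA₁I hA₂I hppos.le hqpos.le hpq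
    rw [smul_eq_mul, smul_eq_mul, ← hAsplit] at this
    exact this
  have hone : (p + q) * Φ A = Φ A := by rw [hpq, one_mul]
  constructor
  · rw [hΦsplit]
    linarith [hJ₁, hJ₂]
  · linarith [hconv2]
end

section
/- (Stability of Jensen's inequality) Let I ⊂ ℝ be an open interval, Φ ∈ C(I) strictly convex, A ∈ I, and (f_t)_{t>0} a family of continuous functions f_t: 𝕋 → I with ∫_𝕋 f_t = A for all t and ∫_𝕋 Φ(f_t(x))dx − Φ(A) → 0 as t → ∞. Then ∫_𝕋 |f_t(x) − A| dx → 0 as t → ∞. -/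
open Filter

/-- Pointwise stability bound: a nonnegative convex function vanishing at `A`
    dominates a multiple of the distance outside a small ball. -/
lemma aux_pointwise {I : Set ℝ} {g : ℝ → ℝ} (hg : ConvexOn ℝ I g)
    (hg0 : ∀ y ∈ I, 0 ≤ g y) {A r m : ℝ} (hA : A ∈ I) (hgA : g A = 0)
    (hr : 0 < r) (hm : 0 < m) (hmu : m ≤ g (A + r)) (hml : m ≤ g (A - r))
    {y : ℝ} (hy : y ∈ I) : |y - A| ≤ r + (r / m) * g y := by
  rcases le_or_gt |y - A| r with h | h
  · have h1 := hg0 y hy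
    have h2 : 0 ≤ (r / m) * g y := by positivity
    linarith
  rcases lt_abs.mp h with h | h
  · -- y > A + r
    have hyA : 0 < y - A := lt_trans hr h
    have hb : (0:ℝ) ≤ 1 - r / (y - A) := by
      have : r / (y - A) < 1 := (div_lt_one hyA).mpr h
      linarith
    have hcx := hg.2 hy hA (le_of_lt (by positivity : 0 < r / (y - A))) hb (by ring)
    have he : (r / (y - A)) • y + (1 - r / (y - A)) • A = A + r := by
      simp only [smul_eq_mul]
      field_simp
      ring
    rw [he, hgA] at hcx
    simp only [smul_eq_mul, mul_zero] at hcx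
    have hkey : m ≤ r / (y - A) * g y := by linarith
    have h2 : r / (y - A) * g y * (y - A) = r * g y := by field_simp
    have h3 : m * (y - A) ≤ r * g y := by nlinarith
    have h4 : y - A ≤ (r / m) * g y := by
      rw [div_mul_eq_mul_div, le_div_iff₀ hm]; nlinarith
    rw [abs_of_pos hyA]
    linarith
  · -- y < A - r
    have h' : r < A - y := by linarith
    have hyA : 0 < A - y := lt_trans hr h'
    have hb : (0:ℝ) ≤ 1 - r / (A - y) := by
      have : r / (A - y) < 1 := (div_lt_one hyA).mpr h'
      linarith
    have hcx := hg.2 hy hA (le_of_lt (by positivity : 0 < r / (A - y))) hb (by ring)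
    have he : (r / (A - y)) • y + (1 - r / (A - y)) • A = A - r := by
      simp only [smul_eq_mul]
      field_simp
      ring
    rw [he, hgA] at hcx
    simp only [smul_eq_mul, mul_zero] at hcx
    have hkey : m ≤ r / (A - y) * g y := by linarith
    have h2 : r / (A - y) * g y * (A - y) = r * g y := by field_simp
    have h3 : m * (A - y) ≤ r * g y := by nlinarith
    have h4 : A - y ≤ (r / m) * g y := by
      rw [div_mul_eq_mul_div, le_div_iff₀ hm]; nlinarith
    rw [abs_sub_comm, abs_of_pos hyA]
    linarith

/-- Strict positivity away from the minimum. -/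
lemma aux_pos {I : Set ℝ} {g : ℝ → ℝ} (hg : StrictConvexOn ℝ I g)
    (hg0 : ∀ y ∈ I, 0 ≤ g y) {A c : ℝ} (hA : A ∈ I) (hgA : g A = 0)
    (hc : c ∈ I) (hne : A ≠ c) (hmid : (A + c) / 2 ∈ I) : 0 < g c := by
  by_contra hle
  push_neg at hle
  have h2 := hg.2 hA hc hne one_half_pos one_half_pos (by norm_num)
  have he : (1/2 : ℝ) • A + (1/2 : ℝ) • c = (A + c) / 2 := by
    simp only [smul_eq_mul]; ring
  rw [he] at h2
  have h0 := hg0 _ hmid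
  rw [hgA] at h2
  simp only [smul_eq_mul, mul_zero] at h2
  nlinarith

/-- stability of Jensen's inequality. The torus 𝕋 is modeled by
    1-periodic functions on ℝ with integrals over [0,1]. -/
theorem stmt_19 (I : Set ℝ) (hIopen : IsOpen I) (hIconv : Convex ℝ I)
    (Φ : ℝ → ℝ) (hΦcont : ContinuousOn Φ I) (hΦconv : StrictConvexOn ℝ I Φ)
    (A : ℝ) (hA : A ∈ I)
    (f : ℝ → ℝ → ℝ)
    (hfc : ∀ t > (0:ℝ), Continuous (f t))
    (hfper : ∀ t > (0:ℝ), Function.Periodic (f t) 1)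
    (hfI : ∀ t > (0:ℝ), ∀ x, f t x ∈ I)
    (hmean : ∀ t > (0:ℝ), (∫ x in (0:ℝ)..1, f t x) = A)
    (hconv : Tendsto (fun t => (∫ x in (0:ℝ)..1, Φ (f t x)) - Φ A) atTop (nhds 0)) :
    Tendsto (fun t => ∫ x in (0:ℝ)..1, |f t x - A|) atTop (nhds 0) := by
  -- radius r0 with ball A r0 ⊆ I
  obtain ⟨r0, hr0, hball⟩ := Metric.isOpen_iff.mp hIopen A hA
  have hmem : ∀ c : ℝ, |c| < r0 → A + c ∈ I := by
    intro c hc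
    apply hball
    simpa [Real.dist_eq, abs_sub_comm] using hc
  -- subgradient s at A
  set S : Set ℝ := (fun y => (Φ y - Φ A) / (y - A)) '' {y | y ∈ I ∧ A < y} with hS
  have hAp : A + r0 / 2 ∈ I := hmem _ (by rw [abs_of_pos (by linarith)]; linarith)
  have hAm : A - r0 / 2 ∈ I := by
    have := hmem (-(r0/2)) (by rw [abs_neg, abs_of_pos (by linarith)]; linarith)
    simpa [sub_eq_add_neg] using this
  have hSne : S.Nonempty := ⟨_, ⟨A + r0/2, ⟨hAp, by linarith⟩, rfl⟩⟩
  have hbdd : BddBelow S := by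
    refine ⟨(Φ A - Φ (A - r0/2)) / (A - (A - r0/2)), ?_⟩
    rintro z ⟨y, ⟨hyI, hyA⟩, rfl⟩
    exact hΦconv.convexOn.slope_mono_adjacent hAm hyI (by linarith) hyA
  set s : ℝ := sInf S with hs
  have hs_right : ∀ y ∈ I, A < y → s ≤ (Φ y - Φ A) / (y - A) := by
    intro y hyI hyA
    exact csInf_le hbdd ⟨y, ⟨hyI, hyA⟩, rfl⟩
  have hs_left : ∀ y ∈ I, y < A → (Φ A - Φ y) / (A - y) ≤ s := by
    intro y hyI hyA
    apply le_csInf hSne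
    rintro z ⟨w, ⟨hwI, hwA⟩, rfl⟩
    exact hΦconv.convexOn.slope_mono_adjacent hyI hwI hyA hwA
  -- the nonnegative strictly convex function g
  set g : ℝ → ℝ := fun y => Φ y - (Φ A + s * (y - A)) with hgdef
  have hgA : g A = 0 := by simp [hgdef]
  have hg0 : ∀ y ∈ I, 0 ≤ g y := by
    intro y hyI
    rcases lt_trichotomy y A with h | h | h
    · have h1 := hs_left y hyI h
      have h2 : A - y > 0 := by linarith
      rw [div_le_iff₀ h2] at h1
      simp only [hgdef]
      nlinarith
    · simp [hgdef, h]
    · have h1 := hs_right y hyI h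
      have h2 : y - A > 0 := by linarith
      rw [le_div_iff₀ h2] at h1
      simp only [hgdef]
      nlinarith
  have haff : ConcaveOn ℝ I (fun y => Φ A + s * (y - A)) := by
    refine ⟨hIconv, fun x hx y hy a b ha hb hab => ?_⟩
    simp only [smul_eq_mul]
    exact le_of_eq (by linear_combination (Φ A - s * A) * hab)
  have hgsc : StrictConvexOn ℝ I g := hΦconv.sub_concaveOn haff
  have hgconv : ConvexOn ℝ I g := hgsc.convexOn
  -- the integral identity: ∫ g ∘ f t = ∫ Φ ∘ f t - Φ A
  have hgint : ∀ t > (0:ℝ), (∫ x in (0:ℝ)..1, g (f t x)) =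
      (∫ x in (0:ℝ)..1, Φ (f t x)) - Φ A := by
    intro t ht
    have hcontf := hfc t ht
    have hcontΦf : Continuous (fun x => Φ (f t x)) :=
      hΦcont.comp_continuous hcontf (hfI t ht)
    have h1 : (∫ x in (0:ℝ)..1, g (f t x)) =
        (∫ x in (0:ℝ)..1, Φ (f t x)) - ∫ x in (0:ℝ)..1, (Φ A + s * (f t x - A)) := by
      rw [← intervalIntegral.integral_sub (g := fun x => Φ A + s * (f t x - A)) (hcontΦf.intervalIntegrable 0 1)
        ((continuous_const.add (continuous_const.mul (hcontf.sub continuous_const)) : Continuous (fun x => Φ A + s * (f t x - A))).intervalIntegrable 0 1)]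
    rw [h1]
    have h2 : (∫ x in (0:ℝ)..1, (Φ A + s * (f t x - A))) = Φ A := by
      rw [intervalIntegral.integral_add (g := fun x => s * (f t x - A)) (by simp : IntervalIntegrable (fun _ => Φ A) MeasureTheory.volume 0 1)
        ((continuous_const.mul (hcontf.sub continuous_const) : Continuous (fun x => s * (f t x - A))).intervalIntegrable 0 1)]
      rw [intervalIntegral.integral_const_mul]
      rw [intervalIntegral.integral_sub (hcontf.intervalIntegrable 0 1)
        (by simp : IntervalIntegrable (fun _ => A) MeasureTheory.volume 0 1)]
      simp [hmean t ht]
    rw [h2]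
  -- main estimate
  rw [Metric.tendsto_nhds]
  intro ε hε
  set r : ℝ := min (r0 / 2) (ε / 3) with hrdef
  have hrpos : 0 < r := lt_min (by linarith) (by linarith)
  have hrr0 : r < r0 := lt_of_le_of_lt (min_le_left _ _) (by linarith)
  have hrε : r ≤ ε / 3 := min_le_right _ _
  have hArp : A + r ∈ I := hmem _ (by rw [abs_of_pos hrpos]; exact hrr0)
  have hArm : A - r ∈ I := by
    have := hmem (-r) (by rw [abs_neg, abs_of_pos hrpos]; exact hrr0)
    simpa [sub_eq_add_neg] using this
  have hmidp : (A + (A + r)) / 2 ∈ I := by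
    have := hmem (r/2) (by rw [abs_of_pos (by linarith)]; linarith)
    have he : (A + (A + r)) / 2 = A + r/2 := by ring
    rwa [he]
  have hmidm : (A + (A - r)) / 2 ∈ I := by
    have := hmem (-(r/2)) (by rw [abs_neg, abs_of_pos (by linarith)]; linarith)
    have he : (A + (A - r)) / 2 = A + -(r/2) := by ring
    rwa [he]
  have hgp : 0 < g (A + r) := aux_pos hgsc hg0 hA hgA hArp (by intro h; nlinarith [congrArg id h]) hmidp
  have hgm : 0 < g (A - r) := aux_pos hgsc hg0 hA hgA hArm (by intro h; nlinarith [congrArg id h]) hmidm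
  set m : ℝ := min (g (A + r)) (g (A - r)) with hmdef
  have hmpos : 0 < m := lt_min hgp hgm
  -- eventually the convexity defect is small and t > 0
  have hev1 : ∀ᶠ t in atTop, (0:ℝ) < t := eventually_gt_atTop 0
  have hev2 : ∀ᶠ t in atTop,
      ((∫ x in (0:ℝ)..1, Φ (f t x)) - Φ A) < (ε / 3) * (m / r) := by
    have := hconv.eventually (eventually_lt_nhds (by positivity : (0:ℝ) < (ε/3) * (m/r)))
    exact this
  filter_upwards [hev1, hev2] with t ht hsmall
  have hcontf := hfc t ht
  have hcontΦf : Continuous (fun x => Φ (f t x)) :=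
    hΦcont.comp_continuous hcontf (hfI t ht)
  have hcontg : Continuous (fun x => g (f t x)) := by
    simp only [hgdef]
    exact hcontΦf.sub (continuous_const.add (continuous_const.mul (hcontf.sub continuous_const)))
  -- pointwise bound
  have hpt : ∀ x : ℝ, |f t x - A| ≤ r + (r / m) * g (f t x) := by
    intro x
    exact aux_pointwise hgconv hg0 hA hgA hrpos hmpos (min_le_left _ _) (min_le_right _ _)
      (hfI t ht x)
  -- integrate
  have hint1 : IntervalIntegrable (fun x => |f t x - A|) MeasureTheory.volume 0 1 :=
    ((hcontf.sub continuous_const).abs).intervalIntegrable 0 1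
  have hint2 : IntervalIntegrable (fun x => r + (r / m) * g (f t x)) MeasureTheory.volume 0 1 :=
    ((continuous_const.add (continuous_const.mul hcontg))).intervalIntegrable 0 1
  have hle : (∫ x in (0:ℝ)..1, |f t x - A|) ≤ ∫ x in (0:ℝ)..1, (r + (r / m) * g (f t x)) := by
    apply intervalIntegral.integral_mono_on (by norm_num) hint1 hint2
    intro x _
    exact hpt x
  have heq : (∫ x in (0:ℝ)..1, (r + (r / m) * g (f t x)))
      = r + (r / m) * ((∫ x in (0:ℝ)..1, Φ (f t x)) - Φ A) := by
    rw [intervalIntegral.integral_add (g := fun x => r / m * g (f t x)) (by simp : IntervalIntegrable (fun _ => r) MeasureTheory.volume 0 1)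
      ((continuous_const.mul hcontg : Continuous (fun x => r / m * g (f t x))).intervalIntegrable 0 1),
      intervalIntegral.integral_const_mul, hgint t ht]
    simp
  rw [heq] at hle
  have hnn : (0:ℝ) ≤ ∫ x in (0:ℝ)..1, |f t x - A| := by
    apply intervalIntegral.integral_nonneg (by norm_num)
    intro x _
    exact abs_nonneg _
  have hbound : (r / m) * ((∫ x in (0:ℝ)..1, Φ (f t x)) - Φ A) < ε / 3 := by
    have h1 : (r / m) * ((∫ x in (0:ℝ)..1, Φ (f t x)) - Φ A) < (r / m) * ((ε / 3) * (m / r)) :=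
      mul_lt_mul_of_pos_left hsmall (by positivity)
    have h2 : (r / m) * ((ε / 3) * (m / r)) = ε / 3 := by
      field_simp
    linarith
  rw [Real.dist_eq, sub_zero, abs_of_nonneg hnn]
  linarith
end
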